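/- With S and Γ positive definite on ℝ^n and ℝ^m respectively, A ∈ ℝ^{m×n}, and m = 0, the Gaussian posterior mean x̄ = S Aᵀ(A S Aᵀ + Γ)^{−1} y is the unique minimizer over x ∈ ℝ^n of the Tikhonov functional J(x) = ‖y − Ax‖²_{Γ^{−1}} + ‖x‖²_{S^{−1}}, where ‖v‖²_M = ⟨v, Mv⟩. -/

import Mathlib

open Matrix

private lemma dp_symm {k : ℕ} {P : Matrix (Fin k) (Fin k) ℝ} (hP : Pᵀ = P)
    (u v : Fin k → ℝ) : u ⬝ᵥ (P *ᵥ v) = v ⬝ᵥ (P *ᵥ u) := by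
  rw [Matrix.dotProduct_mulVec, ← Matrix.mulVec_transpose, hP, dotProduct_comm]

private lemma dp_adj {k l : ℕ} (B : Matrix (Fin k) (Fin l) ℝ) (z : Fin l → ℝ)
    (w : Fin k → ℝ) : z ⬝ᵥ (Bᵀ *ᵥ w) = (B *ᵥ z) ⬝ᵥ w := by
  rw [Matrix.dotProduct_mulVec, ← Matrix.mulVec_transpose, Matrix.transpose_transpose]

/-- With `S`, `Γ` positive definite and zero prior mean, the Gaussian posterior mean
`x̄ = S Aᵀ(A S Aᵀ + Γ)⁻¹ y` is the unique minimizer of the Tikhonov functional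
`J(x) = ‖y − Ax‖²_{Γ⁻¹} + ‖x‖²_{S⁻¹}`. -/
theorem posterior_mean_is_tikhonov_minimizer (n m : ℕ)
    (S : Matrix (Fin n) (Fin n) ℝ) (hS : S.PosDef)
    (Γ : Matrix (Fin m) (Fin m) ℝ) (hΓ : Γ.PosDef)
    (A : Matrix (Fin m) (Fin n) ℝ) (y : Fin m → ℝ) :
    let J : (Fin n → ℝ) → ℝ := fun x =>
      (y - A *ᵥ x) ⬝ᵥ (Γ⁻¹ *ᵥ (y - A *ᵥ x)) + x ⬝ᵥ (S⁻¹ *ᵥ x)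
    let xbar : Fin n → ℝ := (S * Aᵀ * (A * S * Aᵀ + Γ)⁻¹) *ᵥ y
    (∀ x, J xbar ≤ J x) ∧ ∀ x, J x = J xbar → x = xbar := by
  intro J xbar
  set M : Matrix (Fin n) (Fin n) ℝ := Aᵀ * Γ⁻¹ * A + S⁻¹ with hMdef
  have hΓi : (Γ⁻¹).PosDef := hΓ.inv
  have hSi : (S⁻¹).PosDef := hS.inv
  have hM : M.PosDef := by
    rw [hMdef]
    refine Matrix.PosDef.posSemidef_add ?_ hSi
    have := hΓi.posSemidef.conjTranspose_mul_mul_same A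
    simpa [Matrix.mul_assoc] using this
  have hMsymm : Mᵀ = M := hM.isHermitian
  have hΓisymm : (Γ⁻¹)ᵀ = Γ⁻¹ := hΓi.isHermitian
  have hG : (A * S * Aᵀ + Γ).PosDef := by
    refine Matrix.PosDef.posSemidef_add ?_ hΓ
    have := hS.posSemidef.mul_mul_conjTranspose_same A
    simpa [Matrix.mul_assoc] using this
  have hSdet : IsUnit S.det := hS.det_pos.ne'.isUnit
  have hΓdet : IsUnit Γ.det := hΓ.det_pos.ne'.isUnit
  have hGdet : IsUnit (A * S * Aᵀ + Γ).det := hG.det_pos.ne'.isUnit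
  -- key matrix identity
  have h1 : M * (S * Aᵀ) = Aᵀ * Γ⁻¹ * (A * S * Aᵀ + Γ) := by
    rw [hMdef, Matrix.add_mul, Matrix.mul_add,
      Matrix.nonsing_inv_mul_cancel_right _ _ hΓdet,
      Matrix.nonsing_inv_mul_cancel_left _ _ hSdet]
    simp [Matrix.mul_assoc]
  have hkeyM : M * (S * Aᵀ * (A * S * Aᵀ + Γ)⁻¹) = Aᵀ * Γ⁻¹ := by
    rw [← Matrix.mul_assoc, h1, Matrix.mul_nonsing_inv_cancel_right _ _ hGdet]
  have hb : M *ᵥ xbar = Aᵀ *ᵥ (Γ⁻¹ *ᵥ y) := by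
    show M *ᵥ ((S * Aᵀ * (A * S * Aᵀ + Γ)⁻¹) *ᵥ y) = _
    rw [Matrix.mulVec_mulVec, hkeyM, ← Matrix.mulVec_mulVec]
  set b : Fin n → ℝ := Aᵀ *ᵥ (Γ⁻¹ *ᵥ y) with hbdef
  -- J x = (x - xbar) ⬝ M (x - xbar) + J xbar
  have hJ : ∀ x, J x = (x - xbar) ⬝ᵥ (M *ᵥ (x - xbar)) + J xbar := by
    intro x
    have hexp : ∀ z : Fin n → ℝ,
        J z = z ⬝ᵥ (M *ᵥ z) - 2 * (z ⬝ᵥ b) + y ⬝ᵥ (Γ⁻¹ *ᵥ y) := by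
      intro z
      show (y - A *ᵥ z) ⬝ᵥ (Γ⁻¹ *ᵥ (y - A *ᵥ z)) + z ⬝ᵥ (S⁻¹ *ᵥ z) = _
      have hsym : (A *ᵥ z) ⬝ᵥ (Γ⁻¹ *ᵥ y) = y ⬝ᵥ (Γ⁻¹ *ᵥ (A *ᵥ z)) :=
        dp_symm hΓisymm (A *ᵥ z) y
      have hAz : z ⬝ᵥ b = (A *ᵥ z) ⬝ᵥ (Γ⁻¹ *ᵥ y) := dp_adj A z (Γ⁻¹ *ᵥ y)
      have hMz : z ⬝ᵥ (M *ᵥ z) = (A *ᵥ z) ⬝ᵥ (Γ⁻¹ *ᵥ (A *ᵥ z)) + z ⬝ᵥ (S⁻¹ *ᵥ z) := by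
        rw [hMdef, Matrix.add_mulVec, dotProduct_add]
        congr 1
        rw [Matrix.mul_assoc, ← Matrix.mulVec_mulVec, dp_adj, ← Matrix.mulVec_mulVec]
      rw [Matrix.mulVec_sub, dotProduct_sub, sub_dotProduct,
        sub_dotProduct, hMz, hAz, hsym]
      ring
    have hxb : xbar ⬝ᵥ (M *ᵥ xbar) = xbar ⬝ᵥ b := by rw [hb]
    have hxmb : x ⬝ᵥ (M *ᵥ xbar) = x ⬝ᵥ b := by rw [hb]
    have hbmx : xbar ⬝ᵥ (M *ᵥ x) = x ⬝ᵥ b := by rw [dp_symm hMsymm, hxmb]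
    rw [hexp x, hexp xbar, Matrix.mulVec_sub, dotProduct_sub, sub_dotProduct,
      sub_dotProduct, hxb, hxmb, hbmx]
    ring
  have hq : ∀ z : Fin n → ℝ, 0 ≤ z ⬝ᵥ (M *ᵥ z) := fun z => by
    simpa using hM.posSemidef.dotProduct_mulVec_nonneg z
  constructor
  · intro x
    rw [hJ x]
    nlinarith [hq (x - xbar)]
  · intro x hx
    rw [hJ x] at hx
    have h0 : (x - xbar) ⬝ᵥ (M *ᵥ (x - xbar)) = 0 := by linarith
    by_contra hne
    have hxs : x - xbar ≠ 0 := sub_ne_zero.mpr hne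
    have := hM.dotProduct_mulVec_pos hxs
    simp only [star_trivial] at this
    linarith
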